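/- Let p ≥ 2 be a real number. There exists a constant C > 0 (depending only on p) such that for all ξ, η ∈ Matrix (Fin 3) (Fin 3) ℝ, |G_p(ξ) − G_p(η)| ≤ C(1 + G_p(ξ) + G_p(η))^{(p−1)/p}‖ξ − η‖, where G_p(ξ) := max(μ₁^{p/2} + μ₂^{p/2} + μ₃^{p/2} − 3, 0) and μ₁, μ₂, μ₃ are the (real) eigenvalues of the symmetric positive semidefinite matrix C̃(ξ) := (I₃ + ξ)ᵀ(I₃ + ξ). -/

import Mathlib

open Matrix

/-- The Frobenius norm of a real matrix: `‖ξ‖ = (tr(ξᵀξ))^(1/2)`. -/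
noncomputable def frobNorm {M N : ℕ} (ξ : Matrix (Fin M) (Fin N) ℝ) : ℝ :=
  Real.sqrt ((ξᵀ * ξ).trace)

/-- The right Cauchy–Green tensor `C̃(ξ) = (I₃ + ξ)ᵀ(I₃ + ξ)`. -/
noncomputable def Ctil (ξ : Matrix (Fin 3) (Fin 3) ℝ) : Matrix (Fin 3) (Fin 3) ℝ :=
  (1 + ξ)ᵀ * (1 + ξ)

/-- `C̃(ξ)` is a symmetric (hermitian) real matrix. -/
lemma Ctil_isHermitian (ξ : Matrix (Fin 3) (Fin 3) ℝ) : (Ctil ξ).IsHermitian := by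
  have h := Matrix.isHermitian_conjTranspose_mul_self (1 + ξ)
  rwa [Matrix.conjTranspose_eq_transpose_of_trivial] at h

/-- The Ogden-type density `G_p(ξ) = max(μ₁^{p/2} + μ₂^{p/2} + μ₃^{p/2} − 3, 0)`,
where the `μᵢ` are the eigenvalues of `C̃(ξ)`. -/
noncomputable def Gp (p : ℝ) (ξ : Matrix (Fin 3) (Fin 3) ℝ) : ℝ :=
  max ((∑ i, (Ctil_isHermitian ξ).eigenvalues i ^ (p / 2)) - 3) 0


/-- MVT bound: for `0 ≤ b ≤ a` and `1 ≤ q`, `a^q - b^q ≤ q * a^(q-1) * (a-b)`. -/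
lemma rpow_sub_rpow_le {a b q : ℝ} (hb : 0 ≤ b) (hba : b ≤ a) (hq : 1 ≤ q) :
    a ^ q - b ^ q ≤ q * a ^ (q - 1) * (a - b) := by
  rcases eq_or_lt_of_le hba with rfl | hlt
  · simp
  have hderiv : ∀ x : ℝ, HasDerivAt (fun x => x ^ q) (q * x ^ (q - 1)) x := fun x =>
    Real.hasDerivAt_rpow_const (Or.inr hq)
  obtain ⟨c, hc, hc'⟩ := exists_hasDerivAt_eq_slope (fun x => x ^ q) (fun x => q * x ^ (q - 1))
    hlt (fun x _ => (hderiv x).continuousAt.continuousWithinAt) (fun x _ => hderiv x)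
  have hc0 : 0 ≤ c := le_of_lt (lt_of_le_of_lt hb hc.1)
  have hcle : c ^ (q - 1) ≤ a ^ (q - 1) :=
    Real.rpow_le_rpow hc0 hc.2.le (by linarith)
  have hba' : 0 < a - b := by linarith
  have : a ^ q - b ^ q = q * c ^ (q - 1) * (a - b) := by
    rw [eq_div_iff (by linarith : a - b ≠ 0)] at hc'
    linarith [hc']
  rw [this]
  have hq0 : (0:ℝ) ≤ q := by linarith
  have := mul_le_mul_of_nonneg_left hcle hq0
  exact mul_le_mul_of_nonneg_right this hba'.le

lemma abs_rpow_sub_rpow_le {a b q : ℝ} (ha : 0 ≤ a) (hb : 0 ≤ b) (hq : 1 ≤ q) :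
    |a ^ q - b ^ q| ≤ q * max a b ^ (q - 1) * |a - b| := by
  rcases le_total b a with h | h
  · rw [abs_of_nonneg (sub_nonneg.2 (Real.rpow_le_rpow hb h (by linarith))),
      abs_of_nonneg (sub_nonneg.2 h), max_eq_left h]
    exact rpow_sub_rpow_le hb h hq
  · rw [abs_sub_comm, abs_sub_comm a b,
      abs_of_nonneg (sub_nonneg.2 (Real.rpow_le_rpow ha h (by linarith))),
      abs_of_nonneg (sub_nonneg.2 h), max_eq_right h]
    exact rpow_sub_rpow_le ha h hq

section core
variable {n : Type*} [Fintype n] [DecidableEq n]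
variable {A B : Matrix n n ℝ}


/-- The transition matrix between two eigenbases. -/
noncomputable def transMat (hA : A.IsHermitian) (hB : B.IsHermitian) : Matrix n n ℝ :=
  star (hA.eigenvectorUnitary : Matrix n n ℝ) * (hB.eigenvectorUnitary : Matrix n n ℝ)

lemma transMat_mul_star (hA : A.IsHermitian) (hB : B.IsHermitian) :
    transMat hA hB * star (transMat hA hB) = 1 := by
  have hU : star (hA.eigenvectorUnitary : Matrix n n ℝ) *
      (hA.eigenvectorUnitary : Matrix n n ℝ) = 1 := Unitary.coe_star_mul_self _
  have hV : (hB.eigenvectorUnitary : Matrix n n ℝ) *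
      star (hB.eigenvectorUnitary : Matrix n n ℝ) = 1 := Unitary.coe_mul_star_self _
  simp only [transMat, StarMul.star_mul, star_star]
  calc star (hA.eigenvectorUnitary : Matrix n n ℝ) * (hB.eigenvectorUnitary : Matrix n n ℝ) *
      (star (hB.eigenvectorUnitary : Matrix n n ℝ) * (hA.eigenvectorUnitary : Matrix n n ℝ))
      = star (hA.eigenvectorUnitary : Matrix n n ℝ) *
        (((hB.eigenvectorUnitary : Matrix n n ℝ) * star (hB.eigenvectorUnitary : Matrix n n ℝ)) *
          (hA.eigenvectorUnitary : Matrix n n ℝ)) := by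
        simp only [Matrix.mul_assoc]
    _ = 1 := by rw [hV, Matrix.one_mul, hU]

lemma star_transMat_mul (hA : A.IsHermitian) (hB : B.IsHermitian) :
    star (transMat hA hB) * transMat hA hB = 1 := by
  have hU : (hA.eigenvectorUnitary : Matrix n n ℝ) *
      star (hA.eigenvectorUnitary : Matrix n n ℝ) = 1 := Unitary.coe_mul_star_self _
  have hV : star (hB.eigenvectorUnitary : Matrix n n ℝ) *
      (hB.eigenvectorUnitary : Matrix n n ℝ) = 1 := Unitary.coe_star_mul_self _
  simp only [transMat, StarMul.star_mul, star_star]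
  calc star (hB.eigenvectorUnitary : Matrix n n ℝ) * (hA.eigenvectorUnitary : Matrix n n ℝ) *
      (star (hA.eigenvectorUnitary : Matrix n n ℝ) * (hB.eigenvectorUnitary : Matrix n n ℝ))
      = star (hB.eigenvectorUnitary : Matrix n n ℝ) *
        (((hA.eigenvectorUnitary : Matrix n n ℝ) * star (hA.eigenvectorUnitary : Matrix n n ℝ)) *
          (hB.eigenvectorUnitary : Matrix n n ℝ)) := by
        simp only [Matrix.mul_assoc]
    _ = 1 := by rw [hU, Matrix.one_mul, hV]

lemma transMat_row_sum (hA : A.IsHermitian) (hB : B.IsHermitian) (i : n) :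
    ∑ j, (transMat hA hB i j) ^ 2 = 1 := by
  have h := congrFun (congrFun (transMat_mul_star hA hB) i) i
  simpa [Matrix.mul_apply, Matrix.one_apply, Matrix.star_apply, sq] using h

lemma transMat_col_sum (hA : A.IsHermitian) (hB : B.IsHermitian) (j : n) :
    ∑ i, (transMat hA hB i j) ^ 2 = 1 := by
  have h := congrFun (congrFun (star_transMat_mul hA hB) j) j
  simpa [Matrix.mul_apply, Matrix.one_apply, Matrix.star_apply, sq] using h


lemma diag_trace_rep (d e : n → ℝ) (M : Matrix n n ℝ) :
    (Matrix.diagonal d * M * Matrix.diagonal e * star M).trace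
      = ∑ i, ∑ j, d i * e j * (M i j) ^ 2 := by
  have hentry : ∀ i jj, (Matrix.diagonal d * M * Matrix.diagonal e) i jj
      = d i * M i jj * e jj := by
    intro i jj; rw [Matrix.mul_diagonal, Matrix.diagonal_mul]
  show ∑ i, (Matrix.diagonal d * M * Matrix.diagonal e * star M) i i = _
  refine Finset.sum_congr rfl fun i _ => ?_
  rw [Matrix.mul_apply]
  refine Finset.sum_congr rfl fun j _ => ?_
  rw [hentry, Matrix.star_apply, star_trivial]
  ring

lemma trace_mul_rep (hA : A.IsHermitian) (hB : B.IsHermitian) :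
    (A * B).trace = ∑ i, ∑ j, hA.eigenvalues i * hB.eigenvalues j * (transMat hA hB i j) ^ 2 := by
  set U := (hA.eigenvectorUnitary : Matrix n n ℝ) with hUdef
  set V := (hB.eigenvectorUnitary : Matrix n n ℝ) with hVdef
  have hd : (RCLike.ofReal ∘ hA.eigenvalues : n → ℝ) = hA.eigenvalues := by
    funext i; simp [RCLike.ofReal_real_eq_id]
  have he : (RCLike.ofReal ∘ hB.eigenvalues : n → ℝ) = hB.eigenvalues := by
    funext i; simp [RCLike.ofReal_real_eq_id]
  have hstarM : star V * U = star (transMat hA hB) := by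
    rw [transMat, StarMul.star_mul, star_star]
  calc (A * B).trace
      = ((U * Matrix.diagonal hA.eigenvalues * star U)
          * (V * Matrix.diagonal hB.eigenvalues * star V)).trace := by
        conv_lhs => rw [hA.spectral_theorem, hB.spectral_theorem, Unitary.conjStarAlgAut_apply,
          Unitary.conjStarAlgAut_apply]
        rw [hd, he]
    _ = (U * (Matrix.diagonal hA.eigenvalues * transMat hA hB
          * Matrix.diagonal hB.eigenvalues * star V)).trace := by
        rw [transMat, ← hUdef, ← hVdef]; simp only [Matrix.mul_assoc]
    _ = ((Matrix.diagonal hA.eigenvalues * transMat hA hB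
          * Matrix.diagonal hB.eigenvalues * star V) * U).trace := Matrix.trace_mul_comm _ _
    _ = (Matrix.diagonal hA.eigenvalues * transMat hA hB
          * Matrix.diagonal hB.eigenvalues * star (transMat hA hB)).trace := by
        rw [← hstarM]; simp only [Matrix.mul_assoc]
    _ = ∑ i, ∑ j, hA.eigenvalues i * hB.eigenvalues j * (transMat hA hB i j) ^ 2 :=
        diag_trace_rep _ _ _

lemma trace_eq_sum_eigenvalues (hA : A.IsHermitian) : A.trace = ∑ i, hA.eigenvalues i := by
  have hd : (RCLike.ofReal ∘ hA.eigenvalues : n → ℝ) = hA.eigenvalues := by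
    funext i; simp [RCLike.ofReal_real_eq_id]
  calc A.trace
      = ((hA.eigenvectorUnitary : Matrix n n ℝ) * Matrix.diagonal hA.eigenvalues
          * star (hA.eigenvectorUnitary : Matrix n n ℝ)).trace := by
        conv_lhs => rw [hA.spectral_theorem, Unitary.conjStarAlgAut_apply]
        rw [hd]
    _ = ∑ i, hA.eigenvalues i := by
        rw [Matrix.trace_mul_cycle, Unitary.coe_star_mul_self,
          Matrix.one_mul, Matrix.trace_diagonal]

lemma trace_sq_rep (hA : A.IsHermitian) : (A * A).trace = ∑ i, hA.eigenvalues i ^ 2 := by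
  rw [trace_mul_rep hA hA]
  have hM : transMat hA hA = 1 := by
    rw [transMat]; exact Unitary.coe_star_mul_self _
  refine Finset.sum_congr rfl fun i _ => ?_
  rw [Finset.sum_eq_single i]
  · rw [hM]; simp [Matrix.one_apply, sq]
  · intro j _ hj
    rw [hM]; simp [Matrix.one_apply, (Ne.symm hj)]
  · intro h; exact absurd (Finset.mem_univ i) h

lemma hw_identity (hA : A.IsHermitian) (hB : B.IsHermitian) :
    ∑ i, ∑ j, (transMat hA hB i j) ^ 2 * (hA.eigenvalues i - hB.eigenvalues j) ^ 2
      = ((A - B)ᵀ * (A - B)).trace := by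
  have hAt : (A - B)ᵀ = A - B := by
    rw [← Matrix.conjTranspose_eq_transpose_of_trivial]
    exact hA.sub hB
  rw [hAt]
  have expand : (A - B) * (A - B) = A * A - A * B - B * A + B * B := by
    noncomm_ring
  rw [expand, Matrix.trace_add, Matrix.trace_sub, Matrix.trace_sub,
    Matrix.trace_mul_comm B A, trace_sq_rep hA, trace_sq_rep hB, trace_mul_rep hA hB]
  have e1 : ∑ i, ∑ j, hA.eigenvalues i ^ 2 * (transMat hA hB i j) ^ 2
      = ∑ i, hA.eigenvalues i ^ 2 := by
    refine Finset.sum_congr rfl fun i _ => ?_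
    rw [← Finset.mul_sum, transMat_row_sum hA hB, mul_one]
  have e2 : ∑ i, ∑ j, hB.eigenvalues j ^ 2 * (transMat hA hB i j) ^ 2
      = ∑ j, hB.eigenvalues j ^ 2 := by
    rw [Finset.sum_comm]
    refine Finset.sum_congr rfl fun j _ => ?_
    rw [← Finset.mul_sum, transMat_col_sum hA hB, mul_one]
  calc ∑ i, ∑ j, (transMat hA hB i j) ^ 2 * (hA.eigenvalues i - hB.eigenvalues j) ^ 2
      = ∑ i, ∑ j, (hA.eigenvalues i ^ 2 * (transMat hA hB i j) ^ 2
          + hB.eigenvalues j ^ 2 * (transMat hA hB i j) ^ 2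
          - 2 * (hA.eigenvalues i * hB.eigenvalues j * (transMat hA hB i j) ^ 2)) := by
        refine Finset.sum_congr rfl fun i _ => Finset.sum_congr rfl fun j _ => by ring
    _ = (∑ i, ∑ j, hA.eigenvalues i ^ 2 * (transMat hA hB i j) ^ 2)
          + (∑ i, ∑ j, hB.eigenvalues j ^ 2 * (transMat hA hB i j) ^ 2)
          - 2 * ∑ i, ∑ j, hA.eigenvalues i * hB.eigenvalues j * (transMat hA hB i j) ^ 2 := by
        simp only [Finset.sum_sub_distrib, Finset.sum_add_distrib, Finset.mul_sum]
    _ = _ := by rw [e1, e2]; ring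

lemma abs_sum_rpow_sub_le (hA : A.IsHermitian) (hB : B.IsHermitian) {q : ℝ} (hq : 1 ≤ q)
    (hμ : ∀ i, 0 ≤ hA.eigenvalues i) (hν : ∀ i, 0 ≤ hB.eigenvalues i) :
    |(∑ i, hA.eigenvalues i ^ q) - ∑ i, hB.eigenvalues i ^ q| ≤
      q * Real.sqrt ((∑ i, hA.eigenvalues i ^ (2*q-2)) + ∑ i, hB.eigenvalues i ^ (2*q-2)) *
        Real.sqrt (((A - B)ᵀ * (A - B)).trace) := by
  set μ := hA.eigenvalues
  set ν := hB.eigenvalues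
  set W : Matrix n n ℝ := fun i j => (transMat hA hB i j) ^ 2 with hWdef
  have hW : ∀ i j, 0 ≤ W i j := fun i j => sq_nonneg _
  have hrow : ∀ i, ∑ j, W i j = 1 := transMat_row_sum hA hB
  have hcol : ∀ j, ∑ i, W i j = 1 := transMat_col_sum hA hB
  -- step 1 : difference as a weighted double sum
  have step1 : (∑ i, μ i ^ q) - ∑ i, ν i ^ q
      = ∑ i, ∑ j, W i j * (μ i ^ q - ν j ^ q) := by
    have l1 : (∑ i, μ i ^ q) = ∑ i, ∑ j, W i j * μ i ^ q := by
      refine Finset.sum_congr rfl fun i _ => ?_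
      rw [← Finset.sum_mul, hrow, one_mul]
    have l2 : (∑ j, ν j ^ q) = ∑ i, ∑ j, W i j * ν j ^ q := by
      rw [Finset.sum_comm]
      refine Finset.sum_congr rfl fun j _ => ?_
      rw [← Finset.sum_mul, hcol, one_mul]
    rw [l1, l2, ← Finset.sum_sub_distrib]
    refine Finset.sum_congr rfl fun i _ => ?_
    rw [← Finset.sum_sub_distrib]
    exact Finset.sum_congr rfl fun j _ => by ring
  -- step 2 : termwise bound and Cauchy-Schwarz
  have sqrt_term : ∀ i j, W i j * (max (μ i) (ν j) ^ (q-1) * |μ i - ν j|)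
      = Real.sqrt (W i j * max (μ i) (ν j) ^ (2*q-2)) * Real.sqrt (W i j * (μ i - ν j) ^ 2) := by
    intro i j
    have hmax : (0:ℝ) ≤ max (μ i) (ν j) := le_max_of_le_left (hμ i)
    have h1 : Real.sqrt (max (μ i) (ν j) ^ (2*q-2)) = max (μ i) (ν j) ^ (q-1) := by
      have : max (μ i) (ν j) ^ (2*q-2) = (max (μ i) (ν j) ^ (q-1)) ^ 2 := by
        rw [← Real.rpow_natCast (max (μ i) (ν j) ^ (q-1)) 2, ← Real.rpow_mul hmax]
        norm_num
        ring_nf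
      rw [this, Real.sqrt_sq (Real.rpow_nonneg hmax _)]
    rw [Real.sqrt_mul (hW i j), Real.sqrt_mul (hW i j), h1, Real.sqrt_sq_eq_abs, Real.sqrt_sq_eq_abs]
    have habs2 : |transMat hA hB i j| * |transMat hA hB i j| = W i j := by
      simp only [hWdef]
      rw [abs_mul_abs_self]
      ring
    rw [← habs2]
    ring
  have cs : ∑ i, ∑ j, Real.sqrt (W i j * max (μ i) (ν j) ^ (2*q-2))
        * Real.sqrt (W i j * (μ i - ν j) ^ 2)
      ≤ Real.sqrt (∑ i, ∑ j, W i j * max (μ i) (ν j) ^ (2*q-2))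
        * Real.sqrt (∑ i, ∑ j, W i j * (μ i - ν j) ^ 2) := by
    have := Real.sum_sqrt_mul_sqrt_le (Finset.univ : Finset (n × n))
      (f := fun x => W x.1 x.2 * max (μ x.1) (ν x.2) ^ (2*q-2))
      (g := fun x => W x.1 x.2 * (μ x.1 - ν x.2) ^ 2)
      (fun x => mul_nonneg (hW _ _) (Real.rpow_nonneg (le_max_of_le_left (hμ _)) _))
      (fun x => mul_nonneg (hW _ _) (sq_nonneg _))
    simpa only [← Finset.univ_product_univ, Finset.sum_product] using this
  -- step 3 : bound the first sqrt
  have bd1 : ∑ i, ∑ j, W i j * max (μ i) (ν j) ^ (2*q-2)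
      ≤ (∑ i, μ i ^ (2*q-2)) + ∑ i, ν i ^ (2*q-2) := by
    have hmaxle : ∀ i j, max (μ i) (ν j) ^ (2*q-2) ≤ μ i ^ (2*q-2) + ν j ^ (2*q-2) := by
      intro i j
      rcases max_cases (μ i) (ν j) with ⟨h, _⟩ | ⟨h, _⟩ <;> rw [h]
      · exact le_add_of_nonneg_right (Real.rpow_nonneg (hν j) _)
      · exact le_add_of_nonneg_left (Real.rpow_nonneg (hμ i) _)
    calc ∑ i, ∑ j, W i j * max (μ i) (ν j) ^ (2*q-2)
        ≤ ∑ i, ∑ j, W i j * (μ i ^ (2*q-2) + ν j ^ (2*q-2)) := by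
          refine Finset.sum_le_sum fun i _ => Finset.sum_le_sum fun j _ => ?_
          exact mul_le_mul_of_nonneg_left (hmaxle i j) (hW i j)
      _ = (∑ i, ∑ j, W i j * μ i ^ (2*q-2)) + ∑ i, ∑ j, W i j * ν j ^ (2*q-2) := by
          simp only [mul_add, Finset.sum_add_distrib]
      _ = (∑ i, μ i ^ (2*q-2)) + ∑ i, ν i ^ (2*q-2) := by
          congr 1
          · refine Finset.sum_congr rfl fun i _ => ?_
            rw [← Finset.sum_mul, hrow, one_mul]
          · rw [Finset.sum_comm]
            refine Finset.sum_congr rfl fun j _ => ?_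
            rw [← Finset.sum_mul, hcol, one_mul]
  -- assemble
  have habs : |(∑ i, μ i ^ q) - ∑ i, ν i ^ q|
      ≤ q * ∑ i, ∑ j, Real.sqrt (W i j * max (μ i) (ν j) ^ (2*q-2))
          * Real.sqrt (W i j * (μ i - ν j) ^ 2) := by
    rw [step1]
    calc |∑ i, ∑ j, W i j * (μ i ^ q - ν j ^ q)|
        ≤ ∑ i, ∑ j, |W i j * (μ i ^ q - ν j ^ q)| := by
          refine (Finset.abs_sum_le_sum_abs _ _).trans ?_
          exact Finset.sum_le_sum fun i _ => Finset.abs_sum_le_sum_abs _ _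
      _ ≤ ∑ i, ∑ j, q * (W i j * (max (μ i) (ν j) ^ (q-1) * |μ i - ν j|)) := by
          refine Finset.sum_le_sum fun i _ => Finset.sum_le_sum fun j _ => ?_
          rw [abs_mul, abs_of_nonneg (hW i j)]
          calc W i j * |μ i ^ q - ν j ^ q|
              ≤ W i j * (q * max (μ i) (ν j) ^ (q-1) * |μ i - ν j|) :=
                mul_le_mul_of_nonneg_left (abs_rpow_sub_rpow_le (hμ i) (hν j) hq) (hW i j)
            _ = q * (W i j * (max (μ i) (ν j) ^ (q-1) * |μ i - ν j|)) := by ring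
      _ = q * ∑ i, ∑ j, Real.sqrt (W i j * max (μ i) (ν j) ^ (2*q-2))
            * Real.sqrt (W i j * (μ i - ν j) ^ 2) := by
          rw [Finset.mul_sum]
          refine Finset.sum_congr rfl fun i _ => ?_
          rw [Finset.mul_sum]
          exact Finset.sum_congr rfl fun j _ => by rw [sqrt_term i j]
  have hq0 : (0:ℝ) ≤ q := by linarith
  calc |(∑ i, μ i ^ q) - ∑ i, ν i ^ q|
      ≤ q * (Real.sqrt (∑ i, ∑ j, W i j * max (μ i) (ν j) ^ (2*q-2))
          * Real.sqrt (∑ i, ∑ j, W i j * (μ i - ν j) ^ 2)) :=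
        habs.trans (mul_le_mul_of_nonneg_left cs hq0)
    _ ≤ q * Real.sqrt ((∑ i, μ i ^ (2*q-2)) + ∑ i, ν i ^ (2*q-2))
          * Real.sqrt (((A - B)ᵀ * (A - B)).trace) := by
        rw [mul_assoc]
        refine mul_le_mul_of_nonneg_left ?_ hq0
        have h2 : (∑ i, ∑ j, W i j * (μ i - ν j) ^ 2) = ((A - B)ᵀ * (A - B)).trace := by
          rw [← hw_identity hA hB]
        rw [h2]
        exact mul_le_mul_of_nonneg_right (Real.sqrt_le_sqrt bd1) (Real.sqrt_nonneg _)

end core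

section frobenius

attribute [local instance] Matrix.frobeniusSeminormedAddCommGroup

lemma frobNorm_eq_norm {M N : ℕ} (X : Matrix (Fin M) (Fin N) ℝ) : frobNorm X = ‖X‖ := by
  rw [frobNorm, Matrix.frobenius_norm_def, Real.sqrt_eq_rpow]
  congr 1
  have htr : (Xᵀ * X).trace = ∑ j, ∑ i, X i j * X i j := by
    show ∑ j, (Xᵀ * X) j j = _
    refine Finset.sum_congr rfl fun j _ => ?_
    rw [Matrix.mul_apply]
    exact Finset.sum_congr rfl fun i _ => by rw [Matrix.transpose_apply]
  rw [htr, Finset.sum_comm]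
  refine Finset.sum_congr rfl fun i _ => Finset.sum_congr rfl fun j _ => ?_
  rw [show ((2:ℝ)) = ((2:ℕ):ℝ) by norm_num, Real.rpow_natCast, Real.norm_eq_abs, sq_abs, sq]

lemma frobNorm_nonneg {M N : ℕ} (X : Matrix (Fin M) (Fin N) ℝ) : 0 ≤ frobNorm X :=
  Real.sqrt_nonneg _

lemma frobNorm_Ctil_sub (ξ η : Matrix (Fin 3) (Fin 3) ℝ) :
    frobNorm (Ctil ξ - Ctil η)
      ≤ (frobNorm (1 + ξ) + frobNorm (1 + η)) * frobNorm (ξ - η) := by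
  have e1 : (ξ - η) = (1 + ξ) - (1 + η) := by abel
  have e2 : (ξ - η)ᵀ = (1 + ξ)ᵀ - (1 + η)ᵀ := by rw [e1, Matrix.transpose_sub]
  have key : Ctil ξ - Ctil η = (1 + ξ)ᵀ * (ξ - η) + (ξ - η)ᵀ * (1 + η) := by
    simp only [Ctil]
    rw [e2, e1]
    noncomm_ring
  rw [key, frobNorm_eq_norm, frobNorm_eq_norm, frobNorm_eq_norm, frobNorm_eq_norm]
  calc ‖(1 + ξ)ᵀ * (ξ - η) + (ξ - η)ᵀ * (1 + η)‖
      ≤ ‖(1 + ξ)ᵀ * (ξ - η)‖ + ‖(ξ - η)ᵀ * (1 + η)‖ := norm_add_le _ _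
    _ ≤ ‖(1 + ξ)ᵀ‖ * ‖ξ - η‖ + ‖(ξ - η)ᵀ‖ * ‖1 + η‖ :=
        add_le_add (Matrix.frobenius_norm_mul _ _) (Matrix.frobenius_norm_mul _ _)
    _ = (‖1 + ξ‖ + ‖1 + η‖) * ‖ξ - η‖ := by
        rw [Matrix.frobenius_norm_transpose, Matrix.frobenius_norm_transpose]
        ring

end frobenius

set_option maxHeartbeats 2000000 in
/-- The verification, in Example 3, that the Ogden-type density satisfies the
Lipschitz condition (2.5) with `h_n = a_n`. -/
theorem ogden_lipschitz_condition (p : ℝ) (hp : 2 ≤ p) :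
    ∃ C : ℝ, 0 < C ∧ ∀ ξ η : Matrix (Fin 3) (Fin 3) ℝ,
      |Gp p ξ - Gp p η| ≤
        C * (1 + Gp p ξ + Gp p η) ^ ((p - 1) / p) * frobNorm (ξ - η) := by
  have hp0 : (0:ℝ) < p := by linarith
  set q : ℝ := p / 2 with hqdef
  have hq1 : (1:ℝ) ≤ q := by rw [hqdef]; linarith
  have hq0 : (0:ℝ) < q := by linarith
  have hC : (0:ℝ) < 18 * Real.sqrt 18 * q :=
    mul_pos (mul_pos (by norm_num) (Real.sqrt_pos.mpr (by norm_num))) hq0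
  refine ⟨18 * Real.sqrt 18 * q, hC, fun ξ η => ?_⟩
  have hA := Ctil_isHermitian ξ
  have hB := Ctil_isHermitian η
  set μ : Fin 3 → ℝ := hA.eigenvalues with hμdef
  set ν : Fin 3 → ℝ := hB.eigenvalues with hνdef
  have hμ0 : ∀ i, 0 ≤ μ i := by
    intro i
    have hpsd : (Ctil ξ).PosSemidef := by
      have := Matrix.posSemidef_conjTranspose_mul_self (1 + ξ)
      rwa [Matrix.conjTranspose_eq_transpose_of_trivial] at this
    exact hpsd.eigenvalues_nonneg i
  have hν0 : ∀ i, 0 ≤ ν i := by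
    intro i
    have hpsd : (Ctil η).PosSemidef := by
      have := Matrix.posSemidef_conjTranspose_mul_self (1 + η)
      rwa [Matrix.conjTranspose_eq_transpose_of_trivial] at this
    exact hpsd.eigenvalues_nonneg i
  set fξ : ℝ := ∑ i, μ i ^ q with hfξ
  set fη : ℝ := ∑ i, ν i ^ q with hfη
  have hfξ0 : 0 ≤ fξ := Finset.sum_nonneg fun i _ => Real.rpow_nonneg (hμ0 i) _
  have hfη0 : 0 ≤ fη := Finset.sum_nonneg fun i _ => Real.rpow_nonneg (hν0 i) _
  set S : ℝ := 3 + fξ + fη with hSdef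
  have hS3 : (3:ℝ) ≤ S := by linarith
  have hS0 : (0:ℝ) < S := by linarith
  have hsqrtS : ∀ e : ℝ, Real.sqrt (S ^ e) = S ^ (e / 2) := by
    intro e
    rw [Real.sqrt_eq_rpow, ← Real.rpow_mul (le_of_lt hS0)]
    ring_nf
  -- Gp in terms of fξ, fη
  have hGξ : Gp p ξ = max (fξ - 3) 0 := rfl
  have hGη : Gp p η = max (fη - 3) 0 := rfl
  have hGξ0 : 0 ≤ Gp p ξ := by rw [hGξ]; exact le_max_right _ _
  have hGη0 : 0 ≤ Gp p η := by rw [hGη]; exact le_max_right _ _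
  have hG1 : (0:ℝ) < 1 + Gp p ξ + Gp p η := by linarith
  -- step 1
  have step1 : |Gp p ξ - Gp p η| ≤ |fξ - fη| := by
    rw [hGξ, hGη]
    have := abs_max_sub_max_le_abs (fξ - 3) (fη - 3) 0
    simpa using this
  -- step 2 : key perturbation bound
  have step2 := abs_sum_rpow_sub_le hA hB hq1 hμ0 hν0
  rw [← hμdef, ← hνdef, ← hfξ, ← hfη] at step2
  -- eigenvalue bounds
  have hμS : ∀ i, μ i ≤ S ^ q⁻¹ := by
    intro i
    have h1 : μ i ^ q ≤ fξ := Finset.single_le_sum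
      (fun j _ => Real.rpow_nonneg (hμ0 j) q) (Finset.mem_univ i)
    have h2 : μ i ^ q ≤ S := by linarith
    calc μ i = (μ i ^ q) ^ q⁻¹ := (Real.rpow_rpow_inv (hμ0 i) (ne_of_gt hq0)).symm
      _ ≤ S ^ q⁻¹ := Real.rpow_le_rpow (Real.rpow_nonneg (hμ0 i) q) h2 (inv_nonneg.2 (le_of_lt hq0))
  have hνS : ∀ i, ν i ≤ S ^ q⁻¹ := by
    intro i
    have h1 : ν i ^ q ≤ fη := Finset.single_le_sum
      (fun j _ => Real.rpow_nonneg (hν0 j) q) (Finset.mem_univ i)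
    have h2 : ν i ^ q ≤ S := by linarith
    calc ν i = (ν i ^ q) ^ q⁻¹ := (Real.rpow_rpow_inv (hν0 i) (ne_of_gt hq0)).symm
      _ ≤ S ^ q⁻¹ := Real.rpow_le_rpow (Real.rpow_nonneg (hν0 i) q) h2 (inv_nonneg.2 (le_of_lt hq0))
  -- bound on the (2q-2)-sums
  have hsum1 : (∑ i, μ i ^ (2*q-2)) + ∑ i, ν i ^ (2*q-2)
      ≤ 6 * S ^ (q⁻¹ * (2*q-2)) := by
    have hbd : ∀ (w : Fin 3 → ℝ), (∀ i, 0 ≤ w i) → (∀ i, w i ≤ S ^ q⁻¹) →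
        (∑ i, w i ^ (2*q-2)) ≤ 3 * S ^ (q⁻¹ * (2*q-2)) := by
      intro w hw0 hwS
      have : ∀ i ∈ Finset.univ, w i ^ (2*q-2) ≤ S ^ (q⁻¹ * (2*q-2)) := by
        intro i _
        rw [Real.rpow_mul (le_of_lt hS0)]
        exact Real.rpow_le_rpow (hw0 i) (hwS i) (by linarith)
      calc (∑ i, w i ^ (2*q-2)) ≤ ∑ _i : Fin 3, S ^ (q⁻¹ * (2*q-2)) :=
            Finset.sum_le_sum this
        _ = 3 * S ^ (q⁻¹ * (2*q-2)) := by
            rw [Finset.sum_const, Finset.card_univ, Fintype.card_fin]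
            ring
    have := add_le_add (hbd μ hμ0 hμS) (hbd ν hν0 hνS)
    linarith
  -- bound on frobNorm (1 + ξ)
  have hfrob1 : frobNorm (1 + ξ) ≤ Real.sqrt 3 * S ^ (q⁻¹ / 2) := by
    have htr : frobNorm (1 + ξ) = Real.sqrt (∑ i, μ i) := by
      rw [frobNorm]
      congr 1
      exact trace_eq_sum_eigenvalues hA
    rw [htr]
    have h1 : (∑ i, μ i) ≤ 3 * S ^ q⁻¹ := by
      calc (∑ i, μ i) ≤ ∑ _i : Fin 3, S ^ q⁻¹ := Finset.sum_le_sum fun i _ => hμS i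
        _ = 3 * S ^ q⁻¹ := by
            rw [Finset.sum_const, Finset.card_univ, Fintype.card_fin]; ring
    calc Real.sqrt (∑ i, μ i) ≤ Real.sqrt (3 * S ^ q⁻¹) := Real.sqrt_le_sqrt h1
      _ = Real.sqrt 3 * S ^ (q⁻¹ / 2) := by
          rw [Real.sqrt_mul (by norm_num), hsqrtS]
  have hfrob2 : frobNorm (1 + η) ≤ Real.sqrt 3 * S ^ (q⁻¹ / 2) := by
    have htr : frobNorm (1 + η) = Real.sqrt (∑ i, ν i) := by
      rw [frobNorm]
      congr 1
      exact trace_eq_sum_eigenvalues hB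
    rw [htr]
    have h1 : (∑ i, ν i) ≤ 3 * S ^ q⁻¹ := by
      calc (∑ i, ν i) ≤ ∑ _i : Fin 3, S ^ q⁻¹ := Finset.sum_le_sum fun i _ => hνS i
        _ = 3 * S ^ q⁻¹ := by
            rw [Finset.sum_const, Finset.card_univ, Fintype.card_fin]; ring
    calc Real.sqrt (∑ i, ν i) ≤ Real.sqrt (3 * S ^ q⁻¹) := Real.sqrt_le_sqrt h1
      _ = Real.sqrt 3 * S ^ (q⁻¹ / 2) := by
          rw [Real.sqrt_mul (by norm_num), hsqrtS]
  -- sqrt of the (2q-2)-sum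
  have hsqrt1 : Real.sqrt ((∑ i, μ i ^ (2*q-2)) + ∑ i, ν i ^ (2*q-2))
      ≤ Real.sqrt 6 * S ^ (q⁻¹ * (2*q-2) / 2) := by
    calc Real.sqrt ((∑ i, μ i ^ (2*q-2)) + ∑ i, ν i ^ (2*q-2))
        ≤ Real.sqrt (6 * S ^ (q⁻¹ * (2*q-2))) := Real.sqrt_le_sqrt hsum1
      _ = Real.sqrt 6 * S ^ (q⁻¹ * (2*q-2) / 2) := by
          rw [Real.sqrt_mul (by norm_num), hsqrtS]
  -- frobNorm of the difference of Cauchy-Green tensors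
  have hCfrob : Real.sqrt (((Ctil ξ - Ctil η)ᵀ * (Ctil ξ - Ctil η)).trace)
      = frobNorm (Ctil ξ - Ctil η) := rfl
  -- exponent arithmetic
  have hexp : S ^ (q⁻¹ * (2*q-2) / 2) * S ^ (q⁻¹ / 2) = S ^ ((p - 1) / p) := by
    rw [← Real.rpow_add hS0]
    congr 1
    have hpne : p ≠ 0 := ne_of_gt hp0
    rw [hqdef]
    field_simp
    ring
  -- the S bound
  have hSle : S ≤ 9 * (1 + Gp p ξ + Gp p η) := by
    have h1 : fξ - 3 ≤ Gp p ξ := by rw [hGξ]; exact le_max_left _ _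
    have h2 : fη - 3 ≤ Gp p η := by rw [hGη]; exact le_max_left _ _
    nlinarith [hGξ0, hGη0]
  have hSpow : S ^ ((p-1)/p) ≤ 9 * (1 + Gp p ξ + Gp p η) ^ ((p-1)/p) := by
    have ht0 : 0 ≤ (p-1)/p := div_nonneg (by linarith) (le_of_lt hp0)
    have ht1 : (p-1)/p ≤ 1 := by
      rw [div_le_one hp0]; linarith
    calc S ^ ((p-1)/p) ≤ (9 * (1 + Gp p ξ + Gp p η)) ^ ((p-1)/p) :=
          Real.rpow_le_rpow (le_of_lt hS0) hSle ht0
      _ = 9 ^ ((p-1)/p) * (1 + Gp p ξ + Gp p η) ^ ((p-1)/p) :=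
          Real.mul_rpow (by norm_num) (le_of_lt hG1)
      _ ≤ 9 * (1 + Gp p ξ + Gp p η) ^ ((p-1)/p) := by
          have : (9:ℝ) ^ ((p-1)/p) ≤ 9 ^ (1:ℝ) :=
            Real.rpow_le_rpow_of_exponent_le (by norm_num) ht1
          rw [Real.rpow_one] at this
          exact mul_le_mul_of_nonneg_right this (Real.rpow_nonneg (le_of_lt hG1) _)
  -- assemble
  have hfrobpos : 0 ≤ frobNorm (ξ - η) := frobNorm_nonneg _
  calc |Gp p ξ - Gp p η| ≤ |fξ - fη| := step1
    _ ≤ q * Real.sqrt ((∑ i, μ i ^ (2*q-2)) + ∑ i, ν i ^ (2*q-2)) *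
          Real.sqrt (((Ctil ξ - Ctil η)ᵀ * (Ctil ξ - Ctil η)).trace) := step2
    _ = q * Real.sqrt ((∑ i, μ i ^ (2*q-2)) + ∑ i, ν i ^ (2*q-2)) *
          frobNorm (Ctil ξ - Ctil η) := by rw [hCfrob]
    _ ≤ q * (Real.sqrt 6 * S ^ (q⁻¹ * (2*q-2) / 2)) *
          ((frobNorm (1 + ξ) + frobNorm (1 + η)) * frobNorm (ξ - η)) := by
        have hfact : 0 ≤ q * (Real.sqrt 6 * S ^ (q⁻¹ * (2*q-2) / 2)) :=
          mul_nonneg (le_of_lt hq0)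
            (mul_nonneg (Real.sqrt_nonneg _) (Real.rpow_nonneg (le_of_lt hS0) _))
        refine mul_le_mul ?_ (frobNorm_Ctil_sub ξ η) (frobNorm_nonneg _) hfact
        exact mul_le_mul_of_nonneg_left hsqrt1 (le_of_lt hq0)
    _ ≤ q * (Real.sqrt 6 * S ^ (q⁻¹ * (2*q-2) / 2)) *
          ((2 * (Real.sqrt 3 * S ^ (q⁻¹ / 2))) * frobNorm (ξ - η)) := by
        refine mul_le_mul_of_nonneg_left ?_
          (mul_nonneg (le_of_lt hq0)
            (mul_nonneg (Real.sqrt_nonneg _) (Real.rpow_nonneg (le_of_lt hS0) _)))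
        refine mul_le_mul_of_nonneg_right ?_ hfrobpos
        calc frobNorm (1 + ξ) + frobNorm (1 + η)
            ≤ Real.sqrt 3 * S ^ (q⁻¹ / 2) + Real.sqrt 3 * S ^ (q⁻¹ / 2) :=
              add_le_add hfrob1 hfrob2
          _ = 2 * (Real.sqrt 3 * S ^ (q⁻¹ / 2)) := by ring
    _ = (2 * (Real.sqrt 6 * Real.sqrt 3) * q) *
          (S ^ (q⁻¹ * (2*q-2) / 2) * S ^ (q⁻¹ / 2)) * frobNorm (ξ - η) := by ring
    _ = (2 * Real.sqrt 18 * q) * S ^ ((p-1)/p) * frobNorm (ξ - η) := by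
        rw [hexp, ← Real.sqrt_mul (by norm_num : (0:ℝ) ≤ 6)]
        norm_num
    _ ≤ (2 * Real.sqrt 18 * q) * (9 * (1 + Gp p ξ + Gp p η) ^ ((p-1)/p)) *
          frobNorm (ξ - η) := by
        refine mul_le_mul_of_nonneg_right ?_ hfrobpos
        exact mul_le_mul_of_nonneg_left hSpow
          (mul_nonneg (mul_nonneg (by norm_num) (Real.sqrt_nonneg _)) (le_of_lt hq0))
    _ = 18 * Real.sqrt 18 * q * (1 + Gp p ξ + Gp p η) ^ ((p - 1) / p) *
          frobNorm (ξ - η) := by ring
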